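/- Let ε ∈ [0,1), M > 1, and let 𝓟 and 𝓔 be nonempty sets of density matrices on ℂ^d. Then there exists a CPTP map F from d×d complex matrices to 2×2 complex matrices satisfying T(F(ρ), |1⟩⟨1|) ≤ ε for all ρ ∈ 𝓟 and F(τ) = π_M for all τ ∈ 𝓔, if and only if there exists a test E (Hermitian with 0 ≤ E ≤ I) such that tr[Eτ] = 1/M for all τ ∈ 𝓔 and tr[(I−E)ρ] ≤ ε for all ρ ∈ 𝓟. -/

import Mathlib

open Matrix ComplexOrder

/-- Trace norm of a complex matrix: the trace of `sqrt(AᴴA)` (sum of singular values). -/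
noncomputable def traceNorm {n : Type*} [Fintype n] [DecidableEq n]
    (A : Matrix n n ℂ) : ℝ :=
  ((((Matrix.posSemidef_conjTranspose_mul_self A).1.eigenvectorUnitary : Matrix n n ℂ) *
      Matrix.diagonal (((↑) : ℝ → ℂ) ∘ Real.sqrt ∘ (Matrix.posSemidef_conjTranspose_mul_self A).1.eigenvalues) *
      (star (Matrix.posSemidef_conjTranspose_mul_self A).1.eigenvectorUnitary : Matrix n n ℂ)).trace).re

/-- Trace distance `T(X,Y) = ‖X - Y‖₁ / 2`. -/
noncomputable def traceDist {n : Type*} [Fintype n] [DecidableEq n]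
    (X Y : Matrix n n ℂ) : ℝ :=
  traceNorm (X - Y) / 2

/-- A density matrix: positive semidefinite with unit trace. -/
def IsDensityMatrix {n : Type*} [Fintype n] (ρ : Matrix n n ℂ) : Prop :=
  ρ.PosSemidef ∧ ρ.trace = 1

/-- The battery Gibbs state `π_M = diag(1 - 1/M, 1/M)`. -/
noncomputable def piM (M : ℝ) : Matrix (Fin 2) (Fin 2) ℂ :=
  Matrix.diagonal ![((1 - 1/M : ℝ) : ℂ), ((1/M : ℝ) : ℂ)]

/-- The excited battery state `|1⟩⟨1| = diag(0,1)`. -/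
def ket1 : Matrix (Fin 2) (Fin 2) ℂ :=
  Matrix.diagonal ![0, 1]

/-- A test (POVM effect): `0 ≤ E ≤ I`. -/
def IsTest {n : Type*} [Fintype n] [DecidableEq n] (E : Matrix n n ℂ) : Prop :=
  E.PosSemidef ∧ (1 - E).PosSemidef

/-- Choi matrix `Σ_{ij} E_{ij} ⊗ F(E_{ij})` of a linear map on matrices. -/
noncomputable def choiMatrix {n m : Type*} [Fintype n] [DecidableEq n] [Fintype m]
    (F : Matrix n n ℂ →ₗ[ℂ] Matrix m m ℂ) :
    Matrix (n × m) (n × m) ℂ :=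
  fun p q => F (Matrix.single p.1 q.1 1) p.2 q.2

/-- Completely positive (positive semidefinite Choi matrix) and trace preserving. -/
def IsCPTP {n m : Type*} [Fintype n] [DecidableEq n] [Fintype m]
    (F : Matrix n n ℂ →ₗ[ℂ] Matrix m m ℂ) : Prop :=
  (choiMatrix F).PosSemidef ∧ ∀ X, (F X).trace = X.trace

/-- `n`-fold Kronecker (tensor) power of a `2 × 2` matrix, indexed by bit strings. -/
def tensPow (A : Matrix (Fin 2) (Fin 2) ℂ) (n : ℕ) :
    Matrix (Fin n → Fin 2) (Fin n → Fin 2) ℂ :=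
  fun x y => ∏ i, A (x i) (y i)

/-- `ε`-ball (in trace distance) of density matrices around a set `𝓟`. -/
noncomputable def metBall {n : Type*} [Fintype n] [DecidableEq n]
    (ε : ℝ) (P : Set (Matrix n n ℂ)) : Set (Matrix n n ℂ) :=
  {ω | IsDensityMatrix ω ∧ ∃ ρ ∈ P, traceDist ω ρ ≤ ε}

/-! ### Auxiliary lemmas -/

open scoped MatrixOrder in
lemma traceNorm_eq_csqrt {n : Type*} [Fintype n] [DecidableEq n] (A : Matrix n n ℂ) :
    traceNorm A = (CFC.sqrt (Aᴴ * A)).trace.re := by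
  rw [CFC.sqrt_eq_real_sqrt _ (posSemidef_conjTranspose_mul_self A).nonneg,
    cfcₙ_eq_cfc (hf0 := Real.sqrt_zero),
    (posSemidef_conjTranspose_mul_self A).1.cfc_eq, IsHermitian.cfc, Unitary.conjStarAlgAut_apply]
  rfl

lemma psd_smul {n : Type*} [Fintype n] {c : ℝ} (hc : 0 ≤ c) {A : Matrix n n ℂ}
    (hA : A.PosSemidef) : ((c : ℂ) • A).PosSemidef := by
  refine posSemidef_iff_dotProduct_mulVec.mpr ⟨?_, ?_⟩
  · ext i j
    simp [conjTranspose_apply, hA.1.apply]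
  · intro x
    rw [smul_mulVec, dotProduct_smul]
    exact mul_nonneg (by exact_mod_cast Complex.zero_le_real.2 hc) (hA.dotProduct_mulVec_nonneg x)

lemma psd_trace_nonneg {n : Type*} [Fintype n] [DecidableEq n] {A : Matrix n n ℂ}
    (hA : A.PosSemidef) : 0 ≤ A.trace := by
  have h : ∀ i, 0 ≤ A i i := by
    intro i
    have := hA.dotProduct_mulVec_nonneg (Pi.single i 1)
    simpa [mulVec_single, dotProduct, Pi.single_apply, Finset.sum_ite_eq] using this
  exact Finset.sum_nonneg fun i _ => h i

open scoped MatrixOrder in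
lemma trace_mul_psd_nonneg {n : Type*} [Fintype n] [DecidableEq n] {E ρ : Matrix n n ℂ}
    (hE : E.PosSemidef) (hρ : ρ.PosSemidef) : 0 ≤ (E * ρ).trace := by
  have h1 : E * ρ = E * (CFC.sqrt ρ * CFC.sqrt ρ) := by rw [CFC.sqrt_mul_sqrt_self ρ hρ.nonneg]
  rw [h1, ← mul_assoc, trace_mul_cycle]
  have h2 : (CFC.sqrt ρ * E * CFC.sqrt ρ).PosSemidef := by
    have := hE.conjTranspose_mul_mul_same (CFC.sqrt ρ)
    rwa [(Matrix.nonneg_iff_posSemidef.mp (CFC.sqrt_nonneg ρ)).1.eq] at this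
  exact psd_trace_nonneg h2

lemma cayley2 (M : Matrix (Fin 2) (Fin 2) ℂ) :
    M * M = M.trace • M - M.det • (1 : Matrix (Fin 2) (Fin 2) ℂ) := by
  ext i j
  fin_cases i <;> fin_cases j <;>
    simp [mul_apply, Fin.sum_univ_two, trace_fin_two, det_fin_two, one_apply] <;> ring

open scoped MatrixOrder in
lemma traceNorm_fin2 (A : Matrix (Fin 2) (Fin 2) ℂ) :
    traceNorm A = Real.sqrt ((∑ i, ∑ j, Complex.normSq (A i j)) + 2 * ‖A.det‖) := by
  set t : ℝ := ∑ i, ∑ j, Complex.normSq (A i j) with ht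
  set δ : ℝ := ‖A.det‖ with hδ
  have ht0 : 0 ≤ t := Finset.sum_nonneg fun i _ => Finset.sum_nonneg fun j _ => Complex.normSq_nonneg _
  have hδ0 : 0 ≤ δ := norm_nonneg _
  have htr : (Aᴴ * A).trace = (t : ℂ) := by
    simp [trace, mul_apply, conjTranspose_apply, ht, Fin.sum_univ_two, Complex.normSq_eq_conj_mul_self]
    ring
  have hdet : (Aᴴ * A).det = ((δ ^ 2 : ℝ) : ℂ) := by
    rw [det_mul, det_conjTranspose]
    rw [hδ, Complex.sq_norm, Complex.normSq_eq_conj_mul_self]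
    rfl
  by_cases hA0 : A = 0
  · subst hA0
    have h0 : (0 : Matrix (Fin 2) (Fin 2) ℂ) =
        CFC.sqrt ((0 : Matrix (Fin 2) (Fin 2) ℂ)ᴴ * 0) := by simp
    rw [traceNorm_eq_csqrt, ← h0]
    simp [ht, hδ]
  · have htpos : 0 < t := by
      rcases lt_or_eq_of_le ht0 with h | h
      · exact h
      · exfalso; apply hA0
        ext i j
        have : ∀ i' ∈ (Finset.univ : Finset (Fin 2)), ∀ j' ∈ (Finset.univ : Finset (Fin 2)),
            Complex.normSq (A i' j') = 0 := by
          intro i' _ j' _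
          have h1 := (Finset.sum_eq_zero_iff_of_nonneg (fun x _ => Finset.sum_nonneg
            (fun y _ => Complex.normSq_nonneg (A x y)))).1 h.symm i' (Finset.mem_univ _)
          exact (Finset.sum_eq_zero_iff_of_nonneg (fun y _ => Complex.normSq_nonneg _)).1 h1 j' (Finset.mem_univ _)
        simpa [Complex.normSq_eq_zero] using this i (Finset.mem_univ _) j (Finset.mem_univ _)
    set s : ℝ := Real.sqrt (t + 2 * δ) with hs
    have hspos : 0 < s := Real.sqrt_pos.2 (by linarith)
    have hs2 : s ^ 2 = t + 2 * δ := Real.sq_sqrt (by linarith)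
    set H : Matrix (Fin 2) (Fin 2) ℂ := Aᴴ * A with hH
    set B : Matrix (Fin 2) (Fin 2) ℂ := ((s⁻¹ : ℝ) : ℂ) • (H + ((δ : ℝ) : ℂ) • 1) with hB
    have hBpsd : B.PosSemidef := by
      refine psd_smul (inv_nonneg.2 hspos.le) ?_
      exact (Matrix.posSemidef_conjTranspose_mul_self A).add (psd_smul hδ0 Matrix.PosSemidef.one)
    have hBsq : B ^ 2 = H := by
      have hHH : H * H = ((t : ℂ)) • H - ((δ^2 : ℝ) : ℂ) • 1 := by
        rw [cayley2 H, htr, hdet]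
      rw [pow_two, hB]
      rw [smul_mul_smul_comm]
      rw [add_mul, mul_add, mul_add, hHH]
      rw [mul_smul_comm, mul_one, smul_mul_assoc, one_mul]
      have h11 : (((δ:ℝ):ℂ) • (1 : Matrix (Fin 2) (Fin 2) ℂ)) * (((δ:ℝ):ℂ) • 1)
          = (((δ:ℝ):ℂ) * ((δ:ℝ):ℂ)) • (1 : Matrix (Fin 2) (Fin 2) ℂ) := by
        rw [smul_mul_smul_comm, one_mul]
      rw [h11]
      have : ((t : ℂ)) • H - ((δ^2:ℝ):ℂ) • 1 + ((δ:ℝ):ℂ) • H + (((δ:ℝ):ℂ) • H + (((δ:ℝ):ℂ) * ((δ:ℝ):ℂ)) • 1)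
          = (((t + 2*δ : ℝ)) : ℂ) • H := by
        push_cast
        module
      rw [this, smul_smul]
      have : ((s⁻¹:ℝ):ℂ) * ((s⁻¹:ℝ):ℂ) * (((t + 2*δ : ℝ)) : ℂ) = 1 := by
        have : (s⁻¹ * s⁻¹) * (t + 2*δ) = 1 := by
          rw [← hs2]; field_simp
        rw [← Complex.ofReal_mul, ← Complex.ofReal_mul, this, Complex.ofReal_one]
      rw [this, one_smul]
    have hsqrt : B = CFC.sqrt (Aᴴ * A) :=
      (CFC.sqrt_unique (by rw [← pow_two]; exact hBsq) hBpsd.nonneg).symm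
    rw [traceNorm_eq_csqrt, ← hsqrt, hB, trace_smul, trace_add, trace_smul, htr, trace_one]
    simp only [smul_eq_mul, Fintype.card_fin, Nat.cast_ofNat]
    have e1 : ((s⁻¹:ℝ):ℂ) * ((t:ℂ) + ((δ:ℝ):ℂ) * 2) = ((s⁻¹ * (t + δ * 2) : ℝ) : ℂ) := by
      push_cast; ring
    rw [e1, Complex.ofReal_re]
    have e2 : t + δ * 2 = s * s := by nlinarith [hs2]
    rw [e2]
    field_simp

lemma traceNorm_lower (A : Matrix (Fin 2) (Fin 2) ℂ) (h : A.trace = 0) :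
    2 * (A 0 0).re ≤ traceNorm A := by
  rw [traceNorm_fin2]
  have h11 : A 1 1 = - A 0 0 := by
    have h2 := trace_fin_two A
    rw [h] at h2
    linear_combination -h2
  set a := A 0 0 with ha
  set b := A 0 1
  set c := A 1 0
  have hdet : A.det = -(a * a) - b * c := by
    rw [det_fin_two, h11]; ring
  have hsum : (∑ i, ∑ j, Complex.normSq (A i j))
      = Complex.normSq a + Complex.normSq b + Complex.normSq c + Complex.normSq a := by
    simp [Fin.sum_univ_two, h11]
    ring
  rw [hsum, hdet]
  have h1 : 2 * a.re ≤ 2 * ‖a‖ := by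
    have := Complex.re_le_norm a; linarith
  refine h1.trans ?_
  rw [show (2 : ℝ) * ‖a‖ = Real.sqrt ((2 * ‖a‖)^2) from
    (Real.sqrt_sq (by positivity)).symm]
  apply Real.sqrt_le_sqrt
  have e1 : ‖a‖ * ‖a‖ ≤ ‖-(a*a) - b*c‖ + ‖b‖ * ‖c‖ := by
    have : a * a = (-(a*a) - b*c) * (-1) + (-(b*c)) := by ring
    calc ‖a‖ * ‖a‖ = ‖a * a‖ := (norm_mul a a).symm
      _ = ‖(-(a*a) - b*c) * (-1) + (-(b*c))‖ := by rw [← this]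
      _ ≤ ‖(-(a*a) - b*c) * (-1)‖ + ‖-(b*c)‖ := norm_add_le _ _
      _ = ‖-(a*a) - b*c‖ + ‖b‖ * ‖c‖ := by
          rw [show -(a*a) - b*c = -(b*c + a*a) by ring]
          simp only [norm_mul, norm_neg, norm_one, mul_one]
  have e2 : 2 * (‖b‖ * ‖c‖) ≤ Complex.normSq b + Complex.normSq c := by
    have hb := Complex.sq_norm b
    have hc := Complex.sq_norm c
    nlinarith [sq_nonneg (‖b‖ - ‖c‖)]
  have e3 : Complex.normSq a = ‖a‖ ^ 2 := (Complex.sq_norm a).symm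
  nlinarith [norm_nonneg (-(a*a) - b*c)]

lemma trace_mul_stdBasis' {n : Type*} [Fintype n] [DecidableEq n] (M : Matrix n n ℂ) (i j : n) :
    (M * single i j (1:ℂ)).trace = M j i := by
  simp [trace, mul_apply, single, ite_and, Finset.sum_ite_eq]

lemma Gmat_trace {d : ℕ} (F : Matrix (Fin d) (Fin d) ℂ →ₗ[ℂ] Matrix (Fin 2) (Fin 2) ℂ)
    (a : Fin 2) (X : Matrix (Fin d) (Fin d) ℂ) :
    ((Matrix.of fun i j => F (single j i 1) a a) * X).trace = F X a a := by
  conv_rhs => rw [matrix_eq_sum_single X]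
  rw [map_sum]
  simp only [map_sum, Matrix.sum_apply]
  have : ∀ i j : Fin d, (F (single i j (X i j))) a a = X i j * F (single i j 1) a a := by
    intro i j
    rw [show single i j (X i j) = X i j • single i j (1:ℂ) by
      rw [smul_single, smul_eq_mul, mul_one], LinearMap.map_smul]
    simp
  simp only [this]
  rw [trace, Finset.sum_comm]
  simp only [diag_apply, mul_apply, of_apply]
  congr 1
  ext j
  congr 1
  ext i
  ring

lemma Gmat_psd {d : ℕ} (F : Matrix (Fin d) (Fin d) ℂ →ₗ[ℂ] Matrix (Fin 2) (Fin 2) ℂ)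
    (hC : (choiMatrix F).PosSemidef) (a : Fin 2) :
    (Matrix.of fun i j => F (single j i 1) a a : Matrix (Fin d) (Fin d) ℂ).PosSemidef := by
  refine posSemidef_iff_dotProduct_mulVec.mpr ⟨?_, ?_⟩
  · ext i j
    exact hC.1.apply (j, a) (i, a)
  · intro x
    have h := hC.dotProduct_mulVec_nonneg (fun p => if p.2 = a then star (x p.1) else 0)
    have heq : dotProduct (star (fun p : Fin d × Fin 2 => if p.2 = a then star (x p.1) else 0))
        ((choiMatrix F) *ᵥ (fun p => if p.2 = a then star (x p.1) else 0))
        = dotProduct (star x) ((Matrix.of fun i j => F (single j i 1) a a) *ᵥ x) := by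
      simp only [dotProduct, mulVec, Pi.star_apply, choiMatrix, of_apply,
        Fintype.sum_prod_type, apply_ite (star : ℂ → ℂ), star_zero, star_star,
        ite_mul, zero_mul, mul_ite, mul_zero, Finset.mul_sum,
        Finset.sum_ite_eq', Finset.mem_univ, if_true]
      have inner : ∀ x1 : Fin d,
          (∑ x2 : Fin 2, ∑ x3 : Fin d,
            if x2 = a then x x1 * (F (single x1 x3 1) x2 a * star (x x3)) else 0)
          = ∑ x3 : Fin d, x x1 * (F (single x1 x3 1) a a * star (x x3)) := by
        intro x1
        rw [Finset.sum_comm]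
        simp [Finset.sum_ite_eq']
      simp only [inner]
      rw [Finset.sum_comm]
      exact Finset.sum_congr rfl fun p _ => Finset.sum_congr rfl fun q _ => by ring
    rw [heq] at h
    exact h

/-- The map `X ↦ diag(tr[(1-E)X], tr[EX])`. -/
noncomputable def auxF {d : ℕ} (E : Matrix (Fin d) (Fin d) ℂ) :
    Matrix (Fin d) (Fin d) ℂ →ₗ[ℂ] Matrix (Fin 2) (Fin 2) ℂ where
  toFun X := ((1 - E) * X).trace • single 0 0 (1:ℂ) + (E * X).trace • single 1 1 (1:ℂ)
  map_add' X Y := by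
    simp only [Matrix.mul_add, trace_add, add_smul]
    abel
  map_smul' c X := by
    simp only [Matrix.mul_smul, trace_smul, smul_eq_mul, RingHom.id_apply, smul_add, smul_smul]

lemma psd_kron_unit {n : Type*} [Fintype n] [DecidableEq n] {A : Matrix n n ℂ}
    (hA : A.PosSemidef) (a : Fin 2) :
    Matrix.PosSemidef (Matrix.of (fun p q : n × Fin 2 => A p.1 q.1 * single a a (1:ℂ) p.2 q.2)) := by
  refine posSemidef_iff_dotProduct_mulVec.mpr ⟨?_, ?_⟩
  · ext p q
    simp only [conjTranspose_apply, of_apply, star_mul']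
    have h1 : star (single a a (1:ℂ) q.2 p.2) = single a a (1:ℂ) p.2 q.2 := by
      simp [single, apply_ite (star : ℂ → ℂ), and_comm]
    have h2 := hA.1.apply p.1 q.1
    rw [h1, h2]
  · intro x
    have key : dotProduct (star x) ((Matrix.of (fun p q : n × Fin 2 => A p.1 q.1 * single a a (1:ℂ) p.2 q.2)) *ᵥ x)
        = dotProduct (star fun i => x (i, a)) (A *ᵥ fun i => x (i, a)) := by
      simp only [dotProduct, mulVec, Pi.star_apply, of_apply, single, Matrix.of_apply,
        Fintype.sum_prod_type, ite_and, mul_ite, mul_zero, mul_one, ite_mul, zero_mul,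
        Finset.mul_sum, Finset.sum_ite_irrel, Finset.sum_const_zero,
        Finset.sum_ite_eq, Finset.sum_ite_eq', Finset.mem_univ, if_true]
    rw [key]
    exact hA.dotProduct_mulVec_nonneg _

/-- one-shot work extraction into a clean battery under GPO is
characterized by a subspace-constrained hypothesis test. -/
theorem stmt_6 {d : ℕ} (ε M : ℝ) (hε : ε ∈ Set.Ico (0:ℝ) 1) (hM : 1 < M)
    (𝓟 𝓔 : Set (Matrix (Fin d) (Fin d) ℂ))
    (h𝓟ne : 𝓟.Nonempty) (h𝓔ne : 𝓔.Nonempty)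
    (h𝓟 : ∀ ρ ∈ 𝓟, IsDensityMatrix ρ) (h𝓔 : ∀ τ ∈ 𝓔, IsDensityMatrix τ) :
    (∃ F : Matrix (Fin d) (Fin d) ℂ →ₗ[ℂ] Matrix (Fin 2) (Fin 2) ℂ,
        IsCPTP F ∧ (∀ ρ ∈ 𝓟, traceDist (F ρ) ket1 ≤ ε) ∧
        (∀ τ ∈ 𝓔, F τ = piM M)) ↔
      (∃ E : Matrix (Fin d) (Fin d) ℂ, IsTest E ∧
        (∀ τ ∈ 𝓔, (E * τ).trace = ((1/M : ℝ) : ℂ)) ∧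
        (∀ ρ ∈ 𝓟, ((1 - E) * ρ).trace.re ≤ ε)) := by
  constructor
  · -- forward
    rintro ⟨F, ⟨hC, hTP⟩, hP, hE'⟩
    refine ⟨Matrix.of fun i j => F (single j i 1) 1 1, ?_, ?_, ?_⟩
    · constructor
      · exact Gmat_psd F hC 1
      · have h1E : (1 : Matrix (Fin d) (Fin d) ℂ) - (Matrix.of fun i j => F (single j i 1) 1 1)
            = Matrix.of fun i j => F (single j i 1) 0 0 := by
          ext i j
          have htr := hTP (single j i 1)
          rw [trace_fin_two] at htr
          have hstd : (single j i (1:ℂ)).trace = if i = j then 1 else 0 := by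
            rcases eq_or_ne i j with rfl | hij
            · simp [Matrix.trace_single_eq_same]
            · simp [hij, Matrix.trace_single_eq_of_ne (h := Ne.symm hij)]
          rw [hstd] at htr
          simp only [Matrix.sub_apply, one_apply, of_apply]
          linear_combination -htr
        rw [h1E]
        exact Gmat_psd F hC 0
    · intro τ hτ
      rw [Gmat_trace F 1 τ, hE' τ hτ]
      simp [piM, diagonal]
    · intro ρ hρ
      have h1E : (1 : Matrix (Fin d) (Fin d) ℂ) - (Matrix.of fun i j => F (single j i 1) 1 1)
          = Matrix.of fun i j => F (single j i 1) 0 0 := by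
        ext i j
        have htr := hTP (single j i 1)
        rw [trace_fin_two] at htr
        have hstd : (single j i (1:ℂ)).trace = if i = j then 1 else 0 := by
          rcases eq_or_ne i j with rfl | hij
          · simp [Matrix.trace_single_eq_same]
          · simp [hij, Matrix.trace_single_eq_of_ne (h := Ne.symm hij)]
        rw [hstd] at htr
        simp only [Matrix.sub_apply, one_apply, of_apply]
        linear_combination -htr
      rw [h1E, Gmat_trace F 0 ρ]
      -- F ρ 0 0 ≤ ε via trace distance
      have hA : (F ρ - ket1).trace = 0 := by
        rw [trace_sub, hTP, (h𝓟 ρ hρ).2]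
        simp [ket1, trace_fin_two, diagonal]
      have hl := traceNorm_lower (F ρ - ket1) hA
      have hd := hP ρ hρ
      rw [traceDist] at hd
      have h00 : (F ρ - ket1) 0 0 = F ρ 0 0 := by
        simp [ket1, Matrix.sub_apply, diagonal]
      rw [h00] at hl
      linarith
  · -- backward
    rintro ⟨E, ⟨hEpsd, h1Epsd⟩, hτE, hρE⟩
    refine ⟨auxF E, ⟨?_, ?_⟩, ?_, ?_⟩
    · -- Choi PSD
      have hchoi : choiMatrix (auxF E)
          = Matrix.of (fun p q : Fin d × Fin 2 => (1 - E)ᵀ p.1 q.1 * single 0 0 (1:ℂ) p.2 q.2)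
          + Matrix.of (fun p q : Fin d × Fin 2 => Eᵀ p.1 q.1 * single 1 1 (1:ℂ) p.2 q.2) := by
        ext p q
        simp only [choiMatrix, auxF, LinearMap.coe_mk, AddHom.coe_mk, Matrix.add_apply,
          Matrix.smul_apply, Matrix.of_apply, transpose_apply, smul_eq_mul,
          trace_mul_stdBasis']
      rw [hchoi]
      exact (psd_kron_unit h1Epsd.transpose 0).add (psd_kron_unit hEpsd.transpose 1)
    · -- trace preserving
      intro X
      simp only [auxF, LinearMap.coe_mk, AddHom.coe_mk, trace_add, trace_smul, smul_eq_mul,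
        Matrix.trace_single_eq_same, mul_one]
      rw [← trace_add, ← Matrix.add_mul, sub_add_cancel, Matrix.one_mul]
    · -- trace distance condition
      intro ρ hρ
      have hden := h𝓟 ρ hρ
      have hp : 0 ≤ ((1 - E) * ρ).trace := trace_mul_psd_nonneg h1Epsd hden.1
      obtain ⟨r, hpre, hpr⟩ : ∃ r : ℝ, 0 ≤ r ∧ ((1 - E) * ρ).trace = (r : ℂ) :=
        ⟨(((1 - E) * ρ).trace).re, (Complex.le_def.1 hp).1,
          Complex.ext rfl ((Complex.le_def.1 hp).2).symm⟩
      have hpq : (E * ρ).trace = 1 - (r : ℂ) := by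
        have h1 : ((1 - E) * ρ).trace + (E * ρ).trace = 1 := by
          rw [← trace_add, ← Matrix.add_mul, sub_add_cancel, Matrix.one_mul, hden.2]
        rw [hpr] at h1
        linear_combination h1
      have hD : auxF E ρ - ket1 = Matrix.of ![![(r:ℂ), 0], ![0, -(r:ℂ)]] := by
        ext i j
        fin_cases i <;> fin_cases j <;>
          simp [auxF, ket1, single, diagonal, hpq, hpr] <;> try ring
      rw [traceDist, hD]
      have hnorm : traceNorm (Matrix.of ![![(r:ℂ), 0], ![0, -(r:ℂ)]]) = 2 * r := by
        rw [traceNorm_fin2]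
        have hdet : (Matrix.of ![![(r:ℂ), 0], ![0, -(r:ℂ)]] : Matrix (Fin 2) (Fin 2) ℂ).det
            = ((-(r*r) : ℝ) : ℂ) := by
          rw [det_fin_two]
          push_cast
          simp
          try ring
        have hsum : (∑ i, ∑ j, Complex.normSq ((Matrix.of ![![(r:ℂ), 0], ![0, -(r:ℂ)]] : Matrix (Fin 2) (Fin 2) ℂ) i j))
            = 2 * r^2 := by
          simp [Fin.sum_univ_two, Complex.normSq_ofReal]
          ring
        rw [hsum, hdet, Complex.norm_real, norm_neg, Real.norm_of_nonneg (by positivity : (0:ℝ) ≤ r*r)]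
        rw [show 2*r^2 + 2*(r*r) = (2*r)^2 by ring, Real.sqrt_sq (by positivity)]
      rw [hnorm]
      have hle := hρE ρ hρ
      rw [hpr] at hle
      simp only [Complex.ofReal_re] at hle
      linarith
    · -- F τ = piM
      intro τ hτ
      have hτden := h𝓔 τ hτ
      have hq : (E * τ).trace = ((1/M : ℝ) : ℂ) := hτE τ hτ
      have hpτ : ((1 - E) * τ).trace = ((1 - 1/M : ℝ) : ℂ) := by
        have : ((1 - E) * τ).trace + (E * τ).trace = 1 := by
          rw [← trace_add, ← Matrix.add_mul, sub_add_cancel, Matrix.one_mul, hτden.2]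
        rw [hq] at this
        push_cast at this ⊢
        linear_combination this
      ext i j
      fin_cases i <;> fin_cases j <;>
        simp [auxF, piM, single, diagonal, hq, hpτ]
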